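/- In the unit ball Bⁿ = B(0,1), with x = e₁/3, z = 0, y = −e₁/3, one has p_{Bⁿ}(x,y) = (√5/2)·(p_{Bⁿ}(x,z) + p_{Bⁿ}(z,y)); hence the point pair function in Bⁿ cannot satisfy the quasi-metric inequality with any constant c < √5/2. -/
import Mathlib


open Metric Set

/-- The point pair function of the unit ball `Bⁿ`, where `d_{Bⁿ}(x) = 1 − |x|`. -/
noncomputable def pB {n : ℕ} (x y : EuclideanSpace ℝ (Fin n)) : ℝ :=
  dist x y / Real.sqrt (dist x y ^ 2 + 4 * (1 - ‖x‖) * (1 - ‖y‖))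

/-- With `x = e₁/3`, `z = 0`, `y = −e₁/3` in `Bⁿ`, one has
`p(x,y) = (√5/2)(p(x,z) + p(z,y))`; hence the point pair function on `Bⁿ` cannot be a
quasi-metric with any constant `c < √5/2`. -/
theorem pB_sharp_constant (n : ℕ) (hn : 0 < n)
    (x y z : EuclideanSpace ℝ (Fin n))
    (hx : x = EuclideanSpace.single (⟨0, hn⟩ : Fin n) ((1 : ℝ)/3))
    (hz : z = 0) (hy : y = -x) :
    pB x y = (Real.sqrt 5 / 2) * (pB x z + pB z y) ∧
    ∀ c : ℝ, (∀ a b d : EuclideanSpace ℝ (Fin n), a ∈ Metric.ball (0 : EuclideanSpace ℝ (Fin n)) 1 →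
        b ∈ Metric.ball (0 : EuclideanSpace ℝ (Fin n)) 1 →
        d ∈ Metric.ball (0 : EuclideanSpace ℝ (Fin n)) 1 →
        pB a b ≤ c * (pB a d + pB d b)) → Real.sqrt 5 / 2 ≤ c := by
  have hxn : ‖x‖ = 1/3 := by
    rw [hx, EuclideanSpace.norm_single]; norm_num
  have hyn : ‖y‖ = 1/3 := by rw [hy, norm_neg, hxn]
  have hzn : ‖z‖ = 0 := by rw [hz, norm_zero]
  have hdxy : dist x y = 2/3 := by
    rw [hy, dist_eq_norm, sub_neg_eq_add, ← two_smul ℝ x, norm_smul, hxn]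
    norm_num
  have hdxz : dist x z = 1/3 := by rw [hz, dist_zero_right, hxn]
  have hdzy : dist z y = 1/3 := by rw [hz, dist_zero_left, hyn]
  have h5 : Real.sqrt 5 ^ 2 = 5 := Real.sq_sqrt (by norm_num)
  have h5pos : 0 < Real.sqrt 5 := Real.sqrt_pos.mpr (by norm_num)
  have s1 : Real.sqrt ((2/3 : ℝ) ^ 2 + 4 * (1 - 1/3) * (1 - 1/3)) = 2/3 * Real.sqrt 5 := by
    rw [show ((2/3 : ℝ) ^ 2 + 4 * (1 - 1/3) * (1 - 1/3)) = (2/3)^2 * 5 by norm_num,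
      Real.sqrt_mul (sq_nonneg _), Real.sqrt_sq (by norm_num)]
  have s2 : Real.sqrt ((1/3 : ℝ) ^ 2 + 4 * (1 - 1/3) * (1 - 0)) = 5/3 := by
    rw [show ((1/3 : ℝ) ^ 2 + 4 * (1 - 1/3) * (1 - 0)) = (5/3)^2 by norm_num,
      Real.sqrt_sq (by norm_num)]
  have s3 : Real.sqrt ((1/3 : ℝ) ^ 2 + 4 * (1 - 0) * (1 - 1/3)) = 5/3 := by
    rw [show ((1/3 : ℝ) ^ 2 + 4 * (1 - 0) * (1 - 1/3)) = (5/3)^2 by norm_num,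
      Real.sqrt_sq (by norm_num)]
  have pxy : pB x y = 1 / Real.sqrt 5 := by
    rw [pB, hdxy, hxn, hyn, s1]
    field_simp
  have pxz : pB x z = 1/5 := by
    rw [pB, hdxz, hxn, hzn, s2]; norm_num
  have pzy : pB z y = 1/5 := by
    rw [pB, hdzy, hyn, hzn, s3]; norm_num
  constructor
  · rw [pxy, pxz, pzy]
    field_simp
    nlinarith [h5, h5pos]
  · intro c h
    have hxb : x ∈ Metric.ball (0 : EuclideanSpace ℝ (Fin n)) 1 := by
      rw [mem_ball, dist_zero_right, hxn]; norm_num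
    have hyb : y ∈ Metric.ball (0 : EuclideanSpace ℝ (Fin n)) 1 := by
      rw [mem_ball, dist_zero_right, hyn]; norm_num
    have hzb : z ∈ Metric.ball (0 : EuclideanSpace ℝ (Fin n)) 1 := by
      rw [mem_ball, dist_zero_right, hzn]; norm_num
    have := h x y z hxb hyb hzb
    rw [pxy, pxz, pzy] at this
    rw [div_le_iff₀ h5pos] at this
    nlinarith [h5, h5pos]
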